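/- arXiv:1104.4475 — 2 statements merged into one kernel-verified Lean document; each statement's English description precedes it below -/
import Mathlib

section
/- In the coarse-grain model, the Sameh-Kuck schedule assigning elimination elim(i, k, k) to time step i + k − 2 is a valid coarse-grain schedule, and its makespan (critical path length) equals p + q − 2 when p > q ≥ 1, and 2q − 3 when p = q > 1. -/
namespace CoarseQR

/-- `(i, k)` is a position to be zeroed out in the coarse-grain model of the QR
factorization of a `p × q` matrix: `1 ≤ k ≤ min p q` and `k < i ≤ p`. -/
def IsPos (p q i k : ℕ) : Prop := 1 ≤ k ∧ k ≤ min p q ∧ k < i ∧ i ≤ p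

/-- `piv` and `σ` describe a valid coarse-grain schedule of a `p × q` matrix: position
`(i, k)` is zeroed out by `elim(i, piv i k, k)` (one time unit) at time step `σ i k ≥ 1`;
eliminations sharing a time step involve pairwise disjoint pairs of rows; `elim(i, piv, k)`
comes strictly after all eliminations `elim(i, *, k')` and `elim(piv, *, k')` with
`k' < k`, and strictly before the elimination `elim(piv, *, k)` of its pivot row. -/
def CoarseValidSchedule (p q : ℕ) (piv σ : ℕ → ℕ → ℕ) : Prop :=
  (∀ i k, IsPos p q i k → 1 ≤ σ i k ∧ 1 ≤ piv i k ∧ piv i k ≤ p ∧ piv i k ≠ i) ∧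
  (∀ i k i' k', IsPos p q i k → IsPos p q i' k' → (i, k) ≠ (i', k') →
      σ i k = σ i' k' →
      i ≠ i' ∧ i ≠ piv i' k' ∧ piv i k ≠ i' ∧ piv i k ≠ piv i' k') ∧
  (∀ i k k', IsPos p q i k → 1 ≤ k' → k' < k → σ i k' < σ i k) ∧
  (∀ i k k', IsPos p q i k → 1 ≤ k' → k' < k → k' < piv i k →
      σ (piv i k) k' < σ i k) ∧
  (∀ i k, IsPos p q i k → k < piv i k → σ i k < σ (piv i k) k)

/-- The makespan (critical path length) of a coarse-grain schedule: the largest time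
step used. -/
noncomputable def makespan (p q : ℕ) (σ : ℕ → ℕ → ℕ) : ℕ :=
  sSup { t : ℕ | ∃ i k, IsPos p q i k ∧ t = σ i k }
/-- In the coarse-grain model, the Sameh-Kuck schedule (pivot `k`, time step
`i + k - 2` for position `(i, k)`) is a valid coarse-grain schedule, and its makespan
equals `p + q - 2` when `p > q ≥ 1` and `2q - 3` when `p = q > 1`. -/
theorem samehKuck_coarse (p q : ℕ) (hq : 1 ≤ q) (hpq : q ≤ p) :
    CoarseValidSchedule p q (fun _ k => k) (fun i k => i + k - 2) ∧
    (q < p → makespan p q (fun i k => i + k - 2) = p + q - 2) ∧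
    (p = q → 1 < q → makespan p q (fun i k => i + k - 2) = 2 * q - 3) := by
  refine ⟨⟨?_, ?_, ?_, ?_, ?_⟩, ?_, ?_⟩
  · rintro i k ⟨h1, h2, h3, h4⟩
    have h2' := le_min_iff.mp h2
    show 1 ≤ i + k - 2 ∧ 1 ≤ k ∧ k ≤ p ∧ k ≠ i
    omega
  · rintro i k i' k' ⟨h1, h2, h3, h4⟩ ⟨h1', h2', h3', h4'⟩ hne heq
    simp only [ne_eq, Prod.mk.injEq, not_and] at hne
    simp only at heq
    show i ≠ i' ∧ i ≠ k' ∧ k ≠ i' ∧ k ≠ k'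
    omega
  · rintro i k k' ⟨h1, h2, h3, h4⟩ hk1 hk2
    show i + k' - 2 < i + k - 2
    omega
  · rintro i k k' ⟨h1, h2, h3, h4⟩ hk1 hk2 hk3
    show k + k' - 2 < i + k - 2
    omega
  · rintro i k ⟨h1, h2, h3, h4⟩ hlt
    exact absurd (show k < k from hlt) (lt_irrefl k)
  · intro hlt
    have hg : IsGreatest {t : ℕ | ∃ i k, IsPos p q i k ∧ t = i + k - 2}
        (p + q - 2) := by
      constructor
      · exact ⟨p, q, ⟨hq, le_min_iff.mpr ⟨hpq, le_refl q⟩, hlt, le_refl p⟩, by omega⟩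
      · rintro t ⟨i, k, ⟨h1, h2, h3, h4⟩, rfl⟩
        have h2' := le_min_iff.mp h2; omega
    exact hg.csSup_eq
  · intro hpe hq1
    have hg : IsGreatest {t : ℕ | ∃ i k, IsPos p q i k ∧ t = i + k - 2}
        (2 * q - 3) := by
      constructor
      · exact ⟨q, q - 1, ⟨by omega, le_min_iff.mpr ⟨by omega, by omega⟩, by omega, by omega⟩, by omega⟩
      · rintro t ⟨i, k, ⟨h1, h2, h3, h4⟩, rfl⟩
        have h2' := le_min_iff.mp h2; omega
    exact hg.csSup_eq

end CoarseQR
end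

section
/- In the coarse-grain model, the Fibonacci schedule assigning elimination of position (i,k) to time step coarse(i,k) is a valid coarse-grain schedule, and its makespan (critical path length) equals x + 2q − 2 when p > q ≥ 1, and x + 2q − 4 when p = q > 1, where x is the least positive integer such that x(x+1)/2 ≥ p − 1. -/
namespace CoarseQR

/-- The least positive integer `x` such that `x * (x + 1) / 2 ≥ p - 1`. -/
noncomputable def fibX (p : ℕ) : ℕ := sInf {x : ℕ | 1 ≤ x ∧ p - 1 ≤ x * (x + 1) / 2}

/-- The least positive integer `y` such that `i ≤ y * (y + 1) / 2 + 1`. -/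
noncomputable def fibY (i : ℕ) : ℕ := sInf {y : ℕ | 1 ≤ y ∧ i ≤ y * (y + 1) / 2 + 1}

/-- The time step at which the coarse-grain Fibonacci schedule zeroes out position
`(i, k)`: `coarse(i, 1) = x - y + 1` and `coarse(i, k) = coarse(i - 1, k - 1) + 2`. -/
noncomputable def fibCoarse (p i k : ℕ) : ℕ :=
  (fibX p - fibY (i - k + 1) + 1) + 2 * (k - 1)

/-- The number of positions of column `k` zeroed out at the same step as `(i, k)`. -/
noncomputable def fibZ (p i k : ℕ) : ℕ :=
  ((Finset.Icc (k + 1) p).filter fun i' => fibCoarse p i' k = fibCoarse p i k).card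

/-- Fibonacci pivot: `z` positions zeroed out at the same step use the `z` rows just
above them, paired in the natural order. -/
noncomputable def fibPiv (p i k : ℕ) : ℕ := i - fibZ p i k
def T (y : ℕ) : ℕ := y * (y + 1) / 2

lemma two_T (y : ℕ) : 2 * T y = y * (y + 1) := by
  have h : 2 ∣ y * (y + 1) := (Nat.even_mul_succ_self y).two_dvd
  unfold T
  omega

lemma T_succ (y : ℕ) : T (y + 1) = T y + y + 1 := by
  have h1 := two_T y
  have h2 := two_T (y + 1)
  have e : (y+1) * (y+1+1) = y * (y+1) + 2*(y+1) := by ring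
  omega

lemma T_mono : Monotone T := monotone_nat_of_le_succ fun y => by rw [T_succ]; omega

lemma T_ge (y : ℕ) : y ≤ T y := by
  induction y with
  | zero => simp [T]
  | succ n ih => rw [T_succ]; omega

lemma T_pred {y : ℕ} (hy : 1 ≤ y) : T y = T (y - 1) + y := by
  have := T_succ (y - 1)
  rw [show y - 1 + 1 = y from by omega] at this
  omega

lemma fibY_def (i : ℕ) : fibY i = sInf {y : ℕ | 1 ≤ y ∧ i ≤ T y + 1} := rfl

lemma fibY_mem (i : ℕ) : 1 ≤ fibY i ∧ i ≤ T (fibY i) + 1 := by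
  rw [fibY_def]
  have hmem : (i+1) ∈ {y : ℕ | 1 ≤ y ∧ i ≤ T y + 1} := ⟨by omega, by have := T_ge (i+1); omega⟩
  exact Nat.sInf_mem ⟨_, hmem⟩

lemma fibY_le {i y : ℕ} (h1 : 1 ≤ y) (h2 : i ≤ T y + 1) : fibY i ≤ y := by
  rw [fibY_def]; exact Nat.sInf_le ⟨h1, h2⟩

lemma lt_fibY {i y : ℕ} (h : T y + 1 < i) : y < fibY i := by
  by_contra hc
  push_neg at hc
  have h2 := (fibY_mem i).2
  have := T_mono hc
  omega

lemma fibY_mono : Monotone fibY := fun _ b hab =>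
  fibY_le (fibY_mem b).1 (le_trans hab (fibY_mem b).2)

lemma fibY_two : fibY 2 = 1 := by
  have h1 := (fibY_mem 2).1
  have h2 : fibY 2 ≤ 1 := fibY_le le_rfl (by simp [T])
  omega

lemma fibX_eq (p : ℕ) : fibX p = fibY p := by
  unfold fibX fibY
  congr 1
  ext x
  constructor <;> rintro ⟨h1, h2⟩ <;> exact ⟨h1, by omega⟩

lemma fibY_eq_iff {j y : ℕ} (hj : 2 ≤ j) (hy : 1 ≤ y) :
    fibY j = y ↔ T (y - 1) + 2 ≤ j ∧ j ≤ T y + 1 := by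
  constructor
  · intro h
    refine ⟨?_, by rw [← h]; exact (fibY_mem j).2⟩
    rcases Nat.eq_or_lt_of_le hy with h1 | h1
    · simp [← h1, T]; omega
    · by_contra hc
      push_neg at hc
      have : fibY j ≤ y - 1 := fibY_le (by omega) (by omega)
      omega
  · rintro ⟨h1, h2⟩
    have ha : fibY j ≤ y := fibY_le hy h2
    rcases Nat.eq_or_lt_of_le hy with hy1 | hy1
    · have := (fibY_mem j).1; omega
    · have : y - 1 < fibY j := lt_fibY (by omega)
      omega

lemma master (p q i k : ℕ) (h : IsPos p q i k) :
    1 ≤ fibY (i - k + 1) ∧ fibY (i - k + 1) ≤ fibX p ∧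
    T (fibY (i - k + 1) - 1) + k + 1 ≤ i ∧ i ≤ min p (T (fibY (i - k + 1)) + k) ∧
    fibZ p i k = min p (T (fibY (i - k + 1)) + k) - (T (fibY (i - k + 1) - 1) + k) := by
  obtain ⟨hk, hkpq, hki, hip⟩ := h
  set j := i - k + 1 with hj
  set y := fibY j with hy
  have hj2 : 2 ≤ j := by omega
  have hy1 : 1 ≤ y := (fibY_mem j).1
  have hyx : y ≤ fibX p := by
    rw [fibX_eq, hy]; exact fibY_mono (by omega)
  have hchar := (fibY_eq_iff hj2 hy1).mp hy.symm
  have hi1 : T (y-1) + k + 1 ≤ i := by omega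
  have hi2 : i ≤ T y + k := by omega
  have key : ∀ i' ∈ Finset.Icc (k+1) p,
      (fibCoarse p i' k = fibCoarse p i k ↔ (T (y-1) + k + 1 ≤ i' ∧ i' ≤ T y + k)) := by
    intro i' hi'
    rw [Finset.mem_Icc] at hi'
    have hj' : 2 ≤ i' - k + 1 := by omega
    have hy'x : fibY (i' - k + 1) ≤ fibX p := by rw [fibX_eq]; exact fibY_mono (by omega)
    unfold fibCoarse
    rw [← hj, ← hy]
    constructor
    · intro he
      have heq : fibY (i' - k + 1) = y := by omega
      have := (fibY_eq_iff hj' hy1).mp heq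
      omega
    · intro hb
      have heq : fibY (i' - k + 1) = y := (fibY_eq_iff hj' hy1).mpr ⟨by omega, by omega⟩
      omega
  have hset : (Finset.Icc (k+1) p).filter (fun i' => fibCoarse p i' k = fibCoarse p i k)
      = Finset.Icc (T (y-1) + k + 1) (min p (T y + k)) := by
    ext i'
    simp only [Finset.mem_filter, Finset.mem_Icc]
    constructor
    · rintro ⟨⟨h1,h2⟩, h3⟩
      have := (key i' (Finset.mem_Icc.mpr ⟨h1,h2⟩)).mp h3
      omega
    · rintro ⟨h1, h2⟩
      have hm : i' ∈ Finset.Icc (k+1) p := Finset.mem_Icc.mpr ⟨by omega, by omega⟩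
      exact ⟨⟨by omega, by omega⟩, (key i' hm).mpr ⟨h1, by omega⟩⟩
  refine ⟨hy1, hyx, hi1, by omega, ?_⟩
  unfold fibZ
  rw [hset, Nat.card_Icc]
  omega

/-- Packaged facts about a position. -/
lemma facts (p q i k : ℕ) (h : IsPos p q i k) :
    1 ≤ fibY (i - k + 1) ∧ fibY (i - k + 1) ≤ fibX p ∧
    T (fibY (i - k + 1) - 1) + k + 1 ≤ i ∧ i ≤ T (fibY (i - k + 1)) + k ∧ i ≤ p ∧
    1 ≤ fibZ p i k ∧ fibZ p i k ≤ fibY (i - k + 1) ∧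
    fibPiv p i k = i - fibZ p i k ∧
    fibPiv p i k ≤ T (fibY (i - k + 1) - 1) + k ∧
    T (fibY (i - k + 1) - 2) + k ≤ fibPiv p i k := by
  obtain ⟨hy1, hyx, hi1, hi2, hz⟩ := master p q i k h
  obtain ⟨hk, hkpq, hki, hip⟩ := h
  set y := fibY (i - k + 1) with hy
  have hT1 : T y = T (y - 1) + y := T_pred hy1
  have hTg : y - 1 ≤ T (y - 1) := T_ge (y - 1)
  have hpiv : fibPiv p i k = i - fibZ p i k := rfl
  rcases Nat.eq_or_lt_of_le hy1 with h1 | h1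
  · have hT0 : T (y - 2) = 0 := by rw [show y - 2 = 0 from by omega]; simp [T]
    refine ⟨hy1, hyx, hi1, by omega, hip, by omega, by omega, hpiv, by omega, by omega⟩
  · have hT2 : T (y - 1) = T (y - 2) + (y - 1) := T_pred (by omega)
    refine ⟨hy1, hyx, hi1, by omega, hip, by omega, by omega, hpiv, by omega, by omega⟩

/-- In the coarse-grain model, the Fibonacci schedule (position `(i, k)` zeroed out at
time step `coarse(i, k)`, with the Fibonacci pairing) is a valid coarse-grain schedule,
and its makespan equals `x + 2q - 2` when `p > q ≥ 1` and `x + 2q - 4` when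
`p = q > 1`, where `x` is the least positive integer with `x(x+1)/2 ≥ p - 1`. -/
theorem fibonacci_coarse (p q : ℕ) (hq : 1 ≤ q) (hpq : q ≤ p) :
    CoarseValidSchedule p q (fibPiv p) (fibCoarse p) ∧
    (q < p → makespan p q (fibCoarse p) = fibX p + 2 * q - 2) ∧
    (p = q → 1 < q → makespan p q (fibCoarse p) = fibX p + 2 * q - 4) := by
  have hx1 : 1 ≤ fibX p := by rw [fibX_eq]; exact (fibY_mem p).1
  -- separation lemma for cross-column collisions
  have sep : ∀ i k i' k', IsPos p q i k → IsPos p q i' k' → k < k' →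
      fibCoarse p i k = fibCoarse p i' k' → i < fibPiv p i' k' := by
    intro i k i' k' h h' hkk he
    obtain ⟨hy1, hyx, hi1, hi2, -, hz1, hz2, hpiv, hpl, hpg⟩ := facts p q i k h
    obtain ⟨hy1', hyx', hi1', hi2', -, hz1', hz2', hpiv', hpl', hpg'⟩ := facts p q i' k' h'
    set y := fibY (i - k + 1)
    set y' := fibY (i' - k' + 1)
    have hco : (fibX p - y + 1) + 2 * (k - 1) = (fibX p - y' + 1) + 2 * (k' - 1) := he
    have hk1 : 1 ≤ k := h.1
    have hyy : y' = y + 2 * (k' - k) := by omega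
    have hTm : T y ≤ T (y' - 2) := T_mono (by omega)
    omega
  refine ⟨⟨?_, ?_, ?_, ?_, ?_⟩, ?_, ?_⟩
  · -- condition 1
    intro i k h
    obtain ⟨hy1, hyx, hi1, hi2, hip, hz1, hz2, hpiv, hpl, hpg⟩ := facts p q i k h
    have hk1 : 1 ≤ k := h.1
    have hTg : fibY (i-k+1) - 1 ≤ T (fibY (i-k+1) - 1) := T_ge _
    refine ⟨by unfold fibCoarse; omega, by omega, by omega, by omega⟩
  · -- condition 2 : disjointness
    intro i k i' k' h h' hne he
    rcases lt_trichotomy k k' with hkk | hkk | hkk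
    · have h1 := sep i k i' k' h h' hkk he
      obtain ⟨-, -, -, -, -, hz1, -, hpiv, -, -⟩ := facts p q i k h
      obtain ⟨-, -, -, -, -, hz1', -, hpiv', -, -⟩ := facts p q i' k' h'
      have : k < i := h.2.2.1
      omega
    · -- same column
      subst hkk
      obtain ⟨hy1, hyx, hi1, hi2, hip, hz1, hz2, hpiv, hpl, hpg⟩ := facts p q i k h
      obtain ⟨hy1', hyx', hi1', hi2', hip', hz1', hz2', hpiv', hpl', hpg'⟩ := facts p q i' k h'
      have hco : (fibX p - fibY (i-k+1) + 1) + 2 * (k-1)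
          = (fibX p - fibY (i'-k+1) + 1) + 2 * (k-1) := he
      have hyy : fibY (i-k+1) = fibY (i'-k+1) := by omega
      have hii : i ≠ i' := by rintro rfl; exact hne rfl
      have hzz : fibZ p i k = fibZ p i' k := by
        obtain ⟨-,-,-,-,hz⟩ := master p q i k h
        obtain ⟨-,-,-,-,hz'⟩ := master p q i' k h'
        rw [hz, hz', hyy]
      rw [← hyy] at hi1' hi2' hpl' hpg' hz2' hy1' hyx'
      have hTg : fibY (i-k+1) - 1 ≤ T (fibY (i-k+1) - 1) := T_ge _
      omega
    · have h1 := sep i' k' i k h' h hkk he.symm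
      obtain ⟨-, -, -, -, -, hz1, -, hpiv, -, -⟩ := facts p q i k h
      obtain ⟨-, -, -, -, -, hz1', -, hpiv', -, -⟩ := facts p q i' k' h'
      have : k' < i' := h'.2.2.1
      omega
  · -- condition 3
    intro i k k' h hk'1 hk'k
    obtain ⟨hy1, hyx, -, -, -, -, -, -, -, -⟩ := facts p q i k h
    have hmono : fibY (i - k + 1) ≤ fibY (i - k' + 1) := fibY_mono (by omega)
    have hb : fibY (i - k' + 1) ≤ fibX p := by
      rw [fibX_eq]
      exact fibY_mono (by have := h.2.2.2; have := h.1; omega)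
    unfold fibCoarse
    omega
  · -- condition 4
    intro i k k' h hk'1 hk'k hk'piv
    obtain ⟨hy1, hyx, hi1, hi2, hip, hz1, hz2, hpiv, hpl, hpg⟩ := facts p q i k h
    set y := fibY (i - k + 1) with hy
    have hY3 : y - 1 ≤ fibY (fibPiv p i k - k' + 1) := by
      rcases Nat.eq_or_lt_of_le hy1 with h1 | h1
      · omega
      · have : T (y - 2) + 1 < fibPiv p i k - k' + 1 := by omega
        have := lt_fibY this
        omega
    unfold fibCoarse
    omega
  · -- condition 5
    intro i k h hkpiv
    obtain ⟨hy1, hyx, hi1, hi2, hip, hz1, hz2, hpiv, hpl, hpg⟩ := facts p q i k h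
    set y := fibY (i - k + 1) with hy
    have hy2 : 2 ≤ y := by
      by_contra hc
      have hT0 : T (y - 1) = 0 := by rw [show y - 1 = 0 from by omega]; simp [T]
      omega
    have hY2 : fibY (fibPiv p i k - k + 1) ≤ y - 1 :=
      fibY_le (by omega) (by omega)
    unfold fibCoarse
    omega
  · -- makespan, q < p
    intro hqp
    have hpos : IsPos p q (q + 1) q := ⟨hq, le_min hpq le_rfl, by omega, by omega⟩
    have hval : fibCoarse p (q + 1) q = fibX p + 2 * q - 2 := by
      unfold fibCoarse
      rw [show q + 1 - q + 1 = 2 from by omega, fibY_two]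
      omega
    have hmem : fibX p + 2 * q - 2 ∈ { t : ℕ | ∃ i k, IsPos p q i k ∧ t = fibCoarse p i k } :=
      ⟨q + 1, q, hpos, hval.symm⟩
    have hub : ∀ t ∈ { t : ℕ | ∃ i k, IsPos p q i k ∧ t = fibCoarse p i k },
        t ≤ fibX p + 2 * q - 2 := by
      rintro t ⟨i, k, hik, rfl⟩
      obtain ⟨hy1, hyx, -, -, -, -, -, -, -, -⟩ := facts p q i k hik
      have hkq : k ≤ q := le_trans hik.2.1 (min_le_right p q)
      unfold fibCoarse
      omega
    exact le_antisymm (csSup_le ⟨_, hmem⟩ hub) (le_csSup ⟨_, hub⟩ hmem)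
  · -- makespan, p = q
    intro hpq2 hq2
    subst hpq2
    have hpos : IsPos p p p (p - 1) := ⟨by omega, by omega, by omega, le_rfl⟩
    have hval : fibCoarse p p (p - 1) = fibX p + 2 * p - 4 := by
      unfold fibCoarse
      rw [show p - (p - 1) + 1 = 2 from by omega, fibY_two]
      omega
    have hmem : fibX p + 2 * p - 4 ∈ { t : ℕ | ∃ i k, IsPos p p i k ∧ t = fibCoarse p i k } :=
      ⟨p, p - 1, hpos, hval.symm⟩
    have hub : ∀ t ∈ { t : ℕ | ∃ i k, IsPos p p i k ∧ t = fibCoarse p i k },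
        t ≤ fibX p + 2 * p - 4 := by
      rintro t ⟨i, k, hik, rfl⟩
      obtain ⟨hy1, hyx, -, -, -, -, -, -, -, -⟩ := facts p p i k hik
      have hkq : k ≤ p - 1 := by
        have := hik.2.2.1; have := hik.2.2.2; omega
      unfold fibCoarse
      omega
    exact le_antisymm (csSup_le ⟨_, hmem⟩ hub) (le_csSup ⟨_, hub⟩ hmem)
end CoarseQR
end
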